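/- Suppose h: ℤ → ℂ[∂,λ] and e ∈ ℂ, c ∈ ℂ*, satisfy for all i,j ∈ ℤ the identity (λ−μ)·e·c^{i+j} = h_j(∂+λ,μ)·h_i(∂,λ) − h_i(∂+μ,λ)·h_j(∂,μ) in ℂ[∂,λ,μ], and additionally each h_j(∂+λ,μ)·e = h_j(∂,μ)·e (i.e., if e ≠ 0 then each h_j is independent of ∂). Then e = 0. -/
import Mathlib


/-- If h_j ∈ ℂ[∂,λ], e ∈ ℂ, c ∈ ℂ* satisfy
(λ−μ)·e·c^{i+j} = h_j(∂+λ,μ)·h_i(∂,λ) − h_i(∂+μ,λ)·h_j(∂,μ) for all i,j ∈ ℤ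
(as polynomials in ∂,λ,μ, equivalently for all complex values), and
h_j(∂+λ,μ)·e = h_j(∂,μ)·e for all j, then e = 0. -/
theorem stmt_14 (h : ℤ → MvPolynomial (Fin 2) ℂ) (e c : ℂ) (hc : c ≠ 0)
    (hyp : ∀ i j : ℤ, ∀ d l m : ℂ,
      (l - m) * e * c ^ (i + j)
        = MvPolynomial.eval ![d + l, m] (h j) * MvPolynomial.eval ![d, l] (h i)
          - MvPolynomial.eval ![d + m, l] (h i) * MvPolynomial.eval ![d, m] (h j))
    (hind : ∀ j : ℤ, ∀ d l m : ℂ,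
      MvPolynomial.eval ![d + l, m] (h j) * e = MvPolynomial.eval ![d, m] (h j) * e) :
    e = 0 := by
  have h1 := hyp 0 0 0 1 0
  have h2 := hind 0 0 1 0
  simp only [zero_add, add_zero, sub_zero, one_mul, zpow_zero, mul_one] at h1 h2
  have : e * e = 0 := by
    calc e * e = (MvPolynomial.eval ![1, 0] (h 0) * MvPolynomial.eval ![0, 1] (h 0)
        - MvPolynomial.eval ![0, 1] (h 0) * MvPolynomial.eval ![0, 0] (h 0)) * e := by
          rw [← h1]
      _ = MvPolynomial.eval ![0, 1] (h 0) * (MvPolynomial.eval ![1, 0] (h 0) * e)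
          - MvPolynomial.eval ![0, 1] (h 0) * (MvPolynomial.eval ![0, 0] (h 0) * e) := by ring
      _ = 0 := by rw [h2]; ring
  exact mul_self_eq_zero.mp this
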